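/- Let n ≥ 1, let a : Fin n → ℝ and b ∈ ℝ satisfy a i > 0 for all i and b > 0, and let λ ∈ ℝ satisfy -b < λ and λ < a i for all i. Define the linear map f_λ on ℝ^{n+1} (coordinates x₀, x₁, …, x_n) by multiplying the coordinate x_i by Real.sqrt ((a i - λ)/(a i)) for i ≥ 1 and the coordinate x₀ by Real.sqrt ((b + λ)/b). If x ∈ ℝ^{n+1} satisfies ∑_{i=1}^n (x i)^2 + (x 0)^2 = 1 and q(x) = ∑_{i=1}^n (x i)^2 / a i - (x 0)^2 / b = 0, then f_λ x also satisfies ∑_{i=1}^n ((f_λ x) i)^2 + ((f_λ x) 0)^2 = 1 and q_λ(f_λ x) = ∑_{i=1}^n ((f_λ x) i)^2 / (a i - λ) - ((f_λ x) 0)^2 / (b + λ) = 0. (The map f_λ takes the spherical ellipsoid E to the confocal spherical ellipsoid E_λ.) -/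

import Mathlib

/-- The diagonal linear map `f_λ` (entries `√((a i - λ)/a i)` on the coordinates `x_i`, `i ≥ 1`,
and `√((b + λ)/b)` on `x₀`) maps the spherical ellipsoid
`E = {‖x‖ = 1, q(x) = ∑ x_i²/a_i - x₀²/b = 0}` to the confocal spherical ellipsoid `E_λ`. -/
theorem sphere_confocal_map (n : ℕ) (hn : 1 ≤ n) (a : Fin n → ℝ) (b : ℝ)
    (ha : ∀ i, 0 < a i) (hb : 0 < b)
    (lam : ℝ) (hlam₁ : -b < lam) (hlam₂ : ∀ i, lam < a i)
    (f : (Fin (n + 1) → ℝ) →ₗ[ℝ] (Fin (n + 1) → ℝ))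
    (hf0 : ∀ x : Fin (n + 1) → ℝ, f x 0 = Real.sqrt ((b + lam) / b) * x 0)
    (hfi : ∀ (x : Fin (n + 1) → ℝ) (i : Fin n),
      f x i.succ = Real.sqrt ((a i - lam) / a i) * x i.succ)
    (x : Fin (n + 1) → ℝ)
    (hsph : ∑ i : Fin n, (x i.succ) ^ 2 + (x 0) ^ 2 = 1)
    (hq : ∑ i : Fin n, (x i.succ) ^ 2 / a i - (x 0) ^ 2 / b = 0) :
    (∑ i : Fin n, (f x i.succ) ^ 2 + (f x 0) ^ 2 = 1) ∧
      (∑ i : Fin n, (f x i.succ) ^ 2 / (a i - lam) - (f x 0) ^ 2 / (b + lam) = 0) := by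
  have hbl : (0:ℝ) < b + lam := by linarith
  have hal : ∀ i, (0:ℝ) < a i - lam := fun i => by have := hlam₂ i; linarith
  have h0 : (f x 0) ^ 2 = (b + lam) / b * (x 0) ^ 2 := by
    rw [hf0, mul_pow, Real.sq_sqrt (by positivity)]
  have hi : ∀ i : Fin n, (f x i.succ) ^ 2 = (a i - lam) / a i * (x i.succ) ^ 2 := by
    intro i
    rw [hfi, mul_pow, Real.sq_sqrt (div_nonneg (hal i).le (ha i).le)]
  constructor
  · simp only [h0, hi]
    have e1 : ∑ i : Fin n, (a i - lam) / a i * (x i.succ) ^ 2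
        = ∑ i : Fin n, ((x i.succ) ^ 2 - lam * ((x i.succ) ^ 2 / a i)) := by
      refine Finset.sum_congr rfl fun i _ => ?_
      have : a i ≠ 0 := (ha i).ne'
      field_simp
    rw [e1, Finset.sum_sub_distrib, ← Finset.mul_sum]
    have hb' : (b + lam) / b * (x 0) ^ 2 = (x 0) ^ 2 + lam * ((x 0) ^ 2 / b) := by
      field_simp
    rw [hb']
    linear_combination hsph - lam * hq
  · have e2 : ∑ i : Fin n, (f x i.succ) ^ 2 / (a i - lam)
        = ∑ i : Fin n, (x i.succ) ^ 2 / a i := by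
      refine Finset.sum_congr rfl fun i _ => ?_
      rw [hi]
      rw [mul_comm, mul_div_assoc, div_div, mul_comm (a i), div_mul_cancel_left₀ (hal i).ne', div_eq_mul_inv]
    have e3 : (f x 0) ^ 2 / (b + lam) = (x 0) ^ 2 / b := by
      rw [h0, mul_comm, mul_div_assoc, div_div, mul_comm b, div_mul_cancel_left₀ hbl.ne', div_eq_mul_inv]
    rw [e2, e3]; exact hq
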